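/- arXiv:1802.09094 — 2 statements merged into one kernel-verified Lean document; each statement's English description precedes it below -/
import Mathlib

section
/- For all integers n ≥ 2 and E ≥ 1 there exists a constant C(n,E) > 0 with the following property: let 0 < δ ≤ λ ≤ 1, let S ⊆ ℝ^n be a semialgebraic set of complexity at most E, and let T be a δ-tube in ℝ^n with direction e such that |T ∩ S| ≥ λ·|T|. Then T_δ ∩ S_δ (the intersection of the closed δ-neighborhoods of T and of S) contains a cylinder of radius δ and length λ/C(n,E) whose axis is parallel to e. -/
open MeasureTheory Metric Set

noncomputable section

/-- A basic semialgebraic set in `ℝ^d` of complexity at most `E`: cut out by finitely many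
polynomial equations `P i = 0` and strict inequalities `Q j > 0`, the degrees of all
polynomials involved summing to at most `E`. -/
def IsBasicOfComplexity {d : ℕ} (E : ℕ) (S : Set (EuclideanSpace ℝ (Fin d))) : Prop :=
  ∃ Ps Qs : List (MvPolynomial (Fin d) ℝ),
    ((Ps ++ Qs).map MvPolynomial.totalDegree).sum ≤ E ∧
    S = {x | (∀ p ∈ Ps, MvPolynomial.eval (fun i => x i) p = 0) ∧
             (∀ q ∈ Qs, 0 < MvPolynomial.eval (fun i => x i) q)}

/-- A semialgebraic set in `ℝ^d` of complexity at most `E`: a union of at most `E` basic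
sets, each of complexity at most `E`. -/
def IsSemialgebraicOfComplexity {d : ℕ} (E : ℕ) (S : Set (EuclideanSpace ℝ (Fin d))) : Prop :=
  ∃ B : List (Set (EuclideanSpace ℝ (Fin d))),
    B.length ≤ E ∧ (∀ b ∈ B, IsBasicOfComplexity E b) ∧ S = {x | ∃ b ∈ B, x ∈ b}

/-- A δ-tube in `ℝ^d`: the closed δ-neighborhood of a unit line segment contained in the
ball `B(0,2)`, with direction the unit vector `e`. -/
def IsDeltaTube {d : ℕ} (δ : ℝ) (e : EuclideanSpace ℝ (Fin d)) (T : Set (EuclideanSpace ℝ (Fin d))) : Prop :=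
  ‖e‖ = 1 ∧ ∃ a : EuclideanSpace ℝ (Fin d),
    (∀ t ∈ Icc (0:ℝ) 1, a + t • e ∈ closedBall (0 : EuclideanSpace ℝ (Fin d)) 2) ∧
    T = {x | ∃ t ∈ Icc (0:ℝ) 1, dist x (a + t • e) ≤ δ}



def lineComp {d : ℕ} (p₀ e : EuclideanSpace ℝ (Fin d)) (p : MvPolynomial (Fin d) ℝ) :
    Polynomial ℝ :=
  MvPolynomial.aeval (fun i => Polynomial.C (p₀ i) + Polynomial.C (e i) * Polynomial.X) p

lemma lineComp_eval {d : ℕ} (p₀ e : EuclideanSpace ℝ (Fin d)) (p : MvPolynomial (Fin d) ℝ)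
    (t : ℝ) :
    (lineComp p₀ e p).eval t = MvPolynomial.eval (fun i => (p₀ + t • e) i) p := by
  have h : ∀ i : Fin d, (p₀ + t • e) i = p₀ i + e i * t := by
    intro i
    simp [PiLp.add_apply, PiLp.smul_apply, smul_eq_mul, mul_comm]
  simp only [h]
  induction p using MvPolynomial.induction_on with
  | C a => simp [lineComp]
  | add p q hp hq => simp [lineComp, map_add, Polynomial.eval_add] at hp hq ⊢; rw [hp, hq]
  | mul_X p i hp =>
    rw [lineComp] at hp ⊢
    rw [map_mul, Polynomial.eval_mul, hp, MvPolynomial.eval_mul, MvPolynomial.eval_X,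
      MvPolynomial.aeval_X]
    simp

lemma natDegree_lineComp_le {d : ℕ} (p₀ e : EuclideanSpace ℝ (Fin d))
    (p : MvPolynomial (Fin d) ℝ) :
    (lineComp p₀ e p).natDegree ≤ p.totalDegree := by
  rw [lineComp, MvPolynomial.aeval_def, MvPolynomial.eval₂_eq]
  apply Polynomial.natDegree_sum_le_of_forall_le
  intro m hm
  refine le_trans (Polynomial.natDegree_C_mul_le _ _) ?_
  refine le_trans (Polynomial.natDegree_prod_le _ _) ?_
  refine le_trans ?_ (MvPolynomial.le_totalDegree hm)
  have : ∀ i ∈ m.support, ((Polynomial.C (p₀ i) + Polynomial.C (e i) * Polynomial.X) ^ m i).natDegree ≤ m i := by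
    intro i _
    refine le_trans Polynomial.natDegree_pow_le ?_
    have h1 : (Polynomial.C (p₀ i) + Polynomial.C (e i) * Polynomial.X).natDegree ≤ 1 := by
      refine le_trans (Polynomial.natDegree_add_le _ _) ?_
      simp [Polynomial.natDegree_C]
      exact le_trans (Polynomial.natDegree_C_mul_le _ _) (by simp)
    calc m i * (Polynomial.C (p₀ i) + Polynomial.C (e i) * Polynomial.X).natDegree
        ≤ m i * 1 := Nat.mul_le_mul_left _ h1
      _ = m i := mul_one _
  exact le_trans (Finset.sum_le_sum this) (le_of_eq rfl)

lemma pigeon {ι : Type*} (s : Finset ι) (f : ι → ENNReal) (c : ENNReal) (hc : c ≠ 0)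
    (h : c ≤ ∑ i ∈ s, f i) : ∃ i ∈ s, c / s.card ≤ f i := by
  by_contra hcon
  push_neg at hcon
  have hne : s.Nonempty := by
    rcases Finset.eq_empty_or_nonempty s with h0 | h0
    · subst h0; simp at h; exact absurd h hc
    · exact h0
  have hlt : ∑ i ∈ s, f i < ∑ i ∈ s, c / s.card :=
    ENNReal.sum_lt_sum_of_nonempty hne hcon
  rw [Finset.sum_const, nsmul_eq_mul] at hlt
  exact lt_irrefl c (lt_of_lt_of_le (lt_of_le_of_lt h hlt) ENNReal.mul_div_le)

-- closedness of the tube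
lemma tube_isClosed {n : ℕ} (a e : EuclideanSpace ℝ (Fin n)) (δ : ℝ) :
    IsClosed {x : EuclideanSpace ℝ (Fin n) | ∃ t ∈ Icc (0:ℝ) 1, dist x (a + t • e) ≤ δ} := by
  have hK : IsCompact ((fun s : ℝ => a + s • e) '' Icc 0 1) :=
    isCompact_Icc.image (by continuity)
  have hKne : ((fun s : ℝ => a + s • e) '' Icc 0 1).Nonempty :=
    (Set.nonempty_Icc.2 zero_le_one).image _
  have heq : {x : EuclideanSpace ℝ (Fin n) | ∃ t ∈ Icc (0:ℝ) 1, dist x (a + t • e) ≤ δ}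
      = {x | infDist x ((fun s : ℝ => a + s • e) '' Icc 0 1) ≤ δ} := by
    ext x
    constructor
    · rintro ⟨t, ht, hd⟩
      exact le_trans (infDist_le_dist_of_mem (Set.mem_image_of_mem _ ht)) hd
    · intro hx
      obtain ⟨y, ⟨t, ht, rfl⟩, hy⟩ := hK.exists_infDist_eq_dist hKne x
      exact ⟨t, ht, by rw [← hy]; exact hx⟩
  rw [heq]
  exact isClosed_le (continuous_infDist_pt _) continuous_const

lemma exists_good_line {m : ℕ}
    (e : EuclideanSpace ℝ (Fin (m + 1))) (he : ‖e‖ = 1)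
    (a : EuclideanSpace ℝ (Fin (m + 1))) (δ lam : ℝ) (hδ : 0 < δ) (hlam : 0 < lam)
    (A : Set (EuclideanSpace ℝ (Fin (m + 1)))) (hA : MeasurableSet A)
    (hAT : A ⊆ {x | ∃ t ∈ Icc (0:ℝ) 1, dist x (a + t • e) ≤ δ})
    (hvol : ENNReal.ofReal lam * volume {x | ∃ t ∈ Icc (0:ℝ) 1, dist x (a + t • e) ≤ δ}
      ≤ volume A) :
    ∃ p₀ : EuclideanSpace ℝ (Fin (m + 1)),
      ENNReal.ofReal (lam / 2) ≤ volume {t : ℝ | p₀ + t • e ∈ A} := by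
  classical
  set T : Set (EuclideanSpace ℝ (Fin (m + 1))) :=
    {x | ∃ t ∈ Icc (0:ℝ) 1, dist x (a + t • e) ≤ δ} with hTdef
  -- orthonormal basis with b' 0 = e
  have horth : Orthonormal ℝ (Subtype.val : ({e} : Set (EuclideanSpace ℝ (Fin (m+1)))) → _) := by
    constructor
    · rintro ⟨x, hx⟩; simp only [Set.mem_singleton_iff] at hx; subst hx; exact he
    · rintro ⟨x, hx⟩ ⟨y, hy⟩ hxy
      exfalso; apply hxy
      simp only [Set.mem_singleton_iff] at hx hy
      exact Subtype.ext (hx.trans hy.symm)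
  obtain ⟨u, b, hub, hb⟩ := horth.exists_orthonormalBasis_extension
  have hem : e ∈ (u : Set (EuclideanSpace ℝ (Fin (m+1)))) := hub rfl
  have hcard : Fintype.card u = m + 1 := by
    have h1 := Module.finrank_eq_card_basis b.toBasis
    rw [finrank_euclideanSpace_fin] at h1
    exact h1.symm
  let σ : (u : Set (EuclideanSpace ℝ (Fin (m+1)))) ≃ Fin (m+1) := Fintype.equivFinOfCardEq hcard
  let i₀ : (u : Set (EuclideanSpace ℝ (Fin (m+1)))) := ⟨e, hem⟩
  let τ : (u : Set (EuclideanSpace ℝ (Fin (m+1)))) ≃ Fin (m+1) :=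
    σ.trans (Equiv.swap (σ i₀) 0)
  let b' : OrthonormalBasis (Fin (m+1)) ℝ (EuclideanSpace ℝ (Fin (m+1))) := b.reindex τ
  have hb0 : b' 0 = e := by
    have hτ : τ.symm 0 = i₀ := by
      simp only [τ, Equiv.symm_trans_apply, Equiv.symm_swap, Equiv.swap_apply_right,
        Equiv.symm_apply_apply]
    rw [OrthonormalBasis.reindex_apply, hb]
    exact congrArg Subtype.val hτ
  -- the coordinate map
  let ψ := (MeasurableEquiv.toLp 2 (Fin (m+1) → ℝ)).symm
  let φ := MeasurableEquiv.piFinSuccAbove (fun _ : Fin (m+1) => ℝ) 0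
  let F : ℝ × (Fin m → ℝ) → EuclideanSpace ℝ (Fin (m+1)) :=
    fun q => b'.repr.symm (ψ.symm (φ.symm q))
  have hmp : MeasurePreserving F (volume.prod volume) volume := by
    refine MeasurePreserving.comp (b'.measurePreserving_repr_symm) ?_
    refine MeasurePreserving.comp ((EuclideanSpace.volume_preserving_symm_measurableEquiv_toLp _).symm ψ) ?_
    exact (volume_preserving_piFinSuccAbove (fun _ : Fin (m+1) => ℝ) 0).symm φ
  -- coordinates of ψ.symm (φ.symm (t, y))
  have hcoord0 : ∀ (t : ℝ) (y : Fin m → ℝ), (ψ.symm (φ.symm (t, y))) 0 = t := by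
    intro t y; rfl
  have hcoords : ∀ (t : ℝ) (y : Fin m → ℝ) (j : Fin m),
      (ψ.symm (φ.symm (t, y))) j.succ = y j := by
    intro t y j
    have h1 : (ψ.symm (φ.symm (t, y))) j.succ
        = Fin.insertNth (α := fun _ => ℝ) (0 : Fin (m+1)) t y ((0 : Fin (m+1)).succAbove j) := by
      rw [Fin.succAbove_zero]; rfl
    rw [h1, Fin.insertNth_apply_succAbove]
  -- F is affine in t
  have hFlin : ∀ (t : ℝ) (y : Fin m → ℝ), F (t, y) = F (0, y) + t • e := by
    intro t y
    have hsplit : ψ.symm (φ.symm (t, y))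
        = ψ.symm (φ.symm (0, y)) + t • EuclideanSpace.single (0 : Fin (m+1)) (1:ℝ) := by
      ext i
      induction i using Fin.cases with
      | zero => simp [hcoord0, PiLp.add_apply, PiLp.smul_apply, EuclideanSpace.single_apply]
      | succ j => simp [hcoords, PiLp.add_apply, PiLp.smul_apply, EuclideanSpace.single_apply,
          Fin.succ_ne_zero]
    show b'.repr.symm (ψ.symm (φ.symm (t, y)))
        = b'.repr.symm (ψ.symm (φ.symm (0, y))) + t • e
    rw [hsplit, map_add, _root_.map_smul, OrthonormalBasis.repr_symm_single, hb0]
  set c : EuclideanSpace ℝ (Fin (m+1)) := b'.repr a with hc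
  have hrepr : ∀ (t : ℝ) (y : Fin m → ℝ), b'.repr (F (t, y)) = ψ.symm (φ.symm (t, y)) := by
    intro t y
    show b'.repr (b'.repr.symm _) = _
    exact b'.repr.apply_symm_apply _
  have hdist : ∀ (t : ℝ) (y : Fin m → ℝ) (s : ℝ),
      dist (F (t, y)) (a + s • e) ≤ δ ↔
      (t - (c 0 + s))^2 + ∑ j, (y j - c j.succ)^2 ≤ δ^2 := by
    intro t y s
    have h1 : dist (F (t, y)) (a + s • e)
        = dist (ψ.symm (φ.symm (t, y))) (c + s • EuclideanSpace.single (0 : Fin (m+1)) (1:ℝ)) := by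
      rw [← b'.repr.dist_map (F (t,y)) (a + s • e), hrepr]
      congr 1
      rw [map_add, _root_.map_smul, ← hb0, OrthonormalBasis.repr_self]
    rw [h1, EuclideanSpace.dist_eq, Real.sqrt_le_left hδ.le]
    have hsum : ∑ i, dist ((ψ.symm (φ.symm (t, y))) i)
          ((c + s • EuclideanSpace.single (0 : Fin (m+1)) (1:ℝ)) i) ^ 2
        = (t - (c 0 + s))^2 + ∑ j, (y j - c j.succ)^2 := by
      rw [Fin.sum_univ_succ]
      congr 1
      · rw [hcoord0]
        simp only [PiLp.add_apply, PiLp.smul_apply, EuclideanSpace.single_apply, if_pos rfl,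
          smul_eq_mul, mul_one, Real.dist_eq, sq_abs, if_true]
      · apply Finset.sum_congr rfl
        intro j _
        rw [hcoords]
        simp only [PiLp.add_apply, PiLp.smul_apply, EuclideanSpace.single_apply,
          (Fin.succ_ne_zero j), if_false, smul_eq_mul, mul_zero, add_zero, Real.dist_eq, sq_abs]
    rw [hsum]
  -- the transverse ball
  set Q : (Fin m → ℝ) → ℝ := fun y => ∑ j, (y j - c j.succ)^2 with hQ
  set D : Set (Fin m → ℝ) := {y | Q y ≤ δ^2} with hD
  have hQcont : Continuous Q := by
    apply continuous_finset_sum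
    intro j _
    exact ((continuous_apply j).sub continuous_const).pow 2
  have hDmeas : MeasurableSet D := measurableSet_le hQcont.measurable measurable_const
  let ψm := (MeasurableEquiv.toLp 2 (Fin m → ℝ)).symm
  have hψm : ∀ (x : EuclideanSpace ℝ (Fin m)) (j : Fin m), ψm x j = x j := fun x j => rfl
  have hpre : ψm ⁻¹' D
      = Metric.closedBall ((WithLp.equiv 2 (Fin m → ℝ)).symm (fun j => c j.succ)) δ := by
    ext x
    simp only [Set.mem_preimage, Metric.mem_closedBall, hD, Set.mem_setOf_eq, hQ]
    rw [EuclideanSpace.dist_eq, Real.sqrt_le_left hδ.le]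
    apply Iff.of_eq
    congr 1
    apply Finset.sum_congr rfl
    intro j _
    rw [hψm, Real.dist_eq, sq_abs]
    rfl
  have hDpos : 0 < volume D := by
    rw [← (EuclideanSpace.volume_preserving_symm_measurableEquiv_toLp (Fin m)).measure_preimage
      hDmeas.nullMeasurableSet, hpre]
    exact measure_closedBall_pos _ _ hδ
  have hDfin : volume D < ⊤ := by
    rw [← (EuclideanSpace.volume_preserving_symm_measurableEquiv_toLp (Fin m)).measure_preimage
      hDmeas.nullMeasurableSet, hpre]
    exact measure_closedBall_lt_top
  -- tube bounds
  have hTsub : F ⁻¹' T ⊆ Set.univ ×ˢ D := by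
    rintro ⟨t, y⟩ hq
    obtain ⟨s, hs, hd⟩ := hq
    refine ⟨Set.mem_univ _, ?_⟩
    have h2 := (hdist t y s).1 hd
    have h0 : (0:ℝ) ≤ (t - (c 0 + s))^2 := sq_nonneg _
    simp only [hD, Set.mem_setOf_eq, hQ]
    linarith
  have hTsup : (Icc (c 0) (c 0 + 1)) ×ˢ D ⊆ F ⁻¹' T := by
    rintro ⟨t, y⟩ ⟨ht, hy⟩
    show ∃ s ∈ Icc (0:ℝ) 1, dist (F (t, y)) (a + s • e) ≤ δ
    refine ⟨t - c 0, ⟨by linarith [ht.1], by linarith [ht.2]⟩, ?_⟩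
    rw [hdist]
    simp only [hD, Set.mem_setOf_eq, hQ] at hy
    have hz : (t - (c 0 + (t - c 0)))^2 = 0 := by ring_nf
    linarith
  have hTmeas : MeasurableSet T := by
    rw [hTdef]
    exact (tube_isClosed a e δ).measurableSet
  have hT'vol : volume.prod volume (F ⁻¹' T) = volume T :=
    hmp.measure_preimage hTmeas.nullMeasurableSet
  have hTlower : volume D ≤ volume T := by
    rw [← hT'vol]
    refine le_trans ?_ (measure_mono hTsup)
    rw [Measure.prod_prod, Real.volume_Icc]
    have h1 : c 0 + 1 - c 0 = 1 := by ring
    rw [h1, ENNReal.ofReal_one, one_mul]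
  have hA'meas : MeasurableSet (F ⁻¹' A) := hA.preimage hmp.measurable
  have hA'vol : volume.prod volume (F ⁻¹' A) = volume A :=
    hmp.measure_preimage hA.nullMeasurableSet
  by_contra hcon
  push_neg at hcon
  have hslice : ∀ y : Fin m → ℝ,
      volume {t : ℝ | (t, y) ∈ F ⁻¹' A} ≤ ENNReal.ofReal (lam/2) := by
    intro y
    have h1 : {t : ℝ | (t, y) ∈ F ⁻¹' A} = {t : ℝ | F (0, y) + t • e ∈ A} := by
      ext t
      simp only [Set.mem_setOf_eq, Set.mem_preimage, hFlin t y]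
    rw [h1]
    exact le_of_lt (hcon (F (0, y)))
  have hzero : ∀ y ∉ D, volume {t : ℝ | (t, y) ∈ F ⁻¹' A} = 0 := by
    intro y hy
    have h1 : {t : ℝ | (t, y) ∈ F ⁻¹' A} = ∅ := by
      ext t
      simp only [Set.mem_setOf_eq, Set.mem_preimage, Set.mem_empty_iff_false, iff_false]
      intro hta
      exact hy (hTsub (show (t, y) ∈ F ⁻¹' T from hAT hta)).2
    rw [h1, measure_empty]
  have hfub : volume.prod volume (F ⁻¹' A)
      = ∫⁻ y, volume {t : ℝ | (t, y) ∈ F ⁻¹' A} ∂(volume : Measure (Fin m → ℝ)) :=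
    Measure.prod_apply_symm hA'meas
  have hle : volume.prod volume (F ⁻¹' A) ≤ ENNReal.ofReal (lam/2) * volume D := by
    rw [hfub]
    calc ∫⁻ y, volume {t : ℝ | (t, y) ∈ F ⁻¹' A} ∂(volume : Measure (Fin m → ℝ))
        ≤ ∫⁻ y, D.indicator (fun _ => ENNReal.ofReal (lam/2)) y
            ∂(volume : Measure (Fin m → ℝ)) := by
          apply lintegral_mono
          intro y
          by_cases hy : y ∈ D
          · rw [Set.indicator_of_mem hy]; exact hslice y
          · rw [Set.indicator_of_notMem hy]
            exact le_of_eq (hzero y hy)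
      _ = ENNReal.ofReal (lam/2) * volume D := lintegral_indicator_const hDmeas _
  have hchain : ENNReal.ofReal lam * volume D ≤ ENNReal.ofReal (lam/2) * volume D :=
    calc ENNReal.ofReal lam * volume D
        ≤ ENNReal.ofReal lam * volume T := mul_le_mul_right hTlower _
      _ ≤ volume A := hvol
      _ = volume.prod volume (F ⁻¹' A) := hA'vol.symm
      _ ≤ _ := hle
  have hfin := (ENNReal.mul_le_mul_iff_left hDpos.ne' hDfin.ne).1 hchain
  rw [ENNReal.ofReal_le_ofReal_iff (by linarith)] at hfin
  linarith

section
open Polynomial in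
set_option maxHeartbeats 2000000 in
/-- the geometric step in the proof of Theorem 4.1 of Katz–Rogers.
For all integers `n ≥ 2`, `E ≥ 1` there is a constant `C(n,E) > 0` so that whenever
`0 < δ ≤ λ ≤ 1`, `S ⊆ ℝ^n` is semialgebraic of complexity at most `E`, and `T` is a δ-tube
with direction `e` satisfying `|T ∩ S| ≥ λ|T|`, the set `T_δ ∩ S_δ` contains a cylinder of
radius `δ` and length `λ / C` whose axis is parallel to `e`. -/
theorem statement10 (n E : ℕ) (hn : 2 ≤ n) (hE : 1 ≤ E) :
    ∃ C : ℝ, 0 < C ∧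
      ∀ δ lam : ℝ, 0 < δ → δ ≤ lam → lam ≤ 1 →
      ∀ S : Set (EuclideanSpace ℝ (Fin n)), IsSemialgebraicOfComplexity E S →
      ∀ (T : Set (EuclideanSpace ℝ (Fin n))) (e : EuclideanSpace ℝ (Fin n)),
        IsDeltaTube δ e T →
        ENNReal.ofReal lam * volume T ≤ volume (T ∩ S) →
        ∃ p : EuclideanSpace ℝ (Fin n),
          {z | ∃ t ∈ Set.Icc (0:ℝ) (lam / C), ∃ w : EuclideanSpace ℝ (Fin n),
              inner ℝ w e = (0:ℝ) ∧ ‖w‖ ≤ δ ∧ z = p + t • e + w}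
            ⊆ Metric.cthickening δ T ∩ Metric.cthickening δ S := by
  classical
  have hE1 : (1:ℝ) ≤ (E:ℝ) := by exact_mod_cast hE
  refine ⟨8 * (E:ℝ) * ((E:ℝ) + 1), by nlinarith, ?_⟩
  intro δ lam hδ hδlam hlam1 S hS T e hT hvolTS
  obtain ⟨m, rfl⟩ : ∃ m, n = m + 1 := ⟨n - 1, by omega⟩
  obtain ⟨he, a, hball, hTdef⟩ := hT
  obtain ⟨B, hBlen, hBbasic, hSdef⟩ := hS
  have hlam0 : 0 < lam := lt_of_lt_of_le hδ hδlam
  -- measurability of S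
  have hcont : ∀ (p : MvPolynomial (Fin (m+1)) ℝ),
      Continuous (fun x : EuclideanSpace ℝ (Fin (m+1)) =>
        MvPolynomial.eval (fun i => x i) p) := by
    intro p
    exact (MvPolynomial.continuous_eval p).comp (PiLp.continuous_ofLp 2 (fun _ : Fin (m+1) => ℝ))
  have hbmeas : ∀ b ∈ B, MeasurableSet b := by
    intro b hb
    obtain ⟨Ps, Qs, _, rfl⟩ := hBbasic b hb
    have h1 : MeasurableSet {x : EuclideanSpace ℝ (Fin (m+1)) |
        ∀ p ∈ Ps, MvPolynomial.eval (fun i => x i) p = 0} := by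
      have : {x : EuclideanSpace ℝ (Fin (m+1)) |
          ∀ p ∈ Ps, MvPolynomial.eval (fun i => x i) p = 0}
          = ⋂ p ∈ {p | p ∈ Ps}, {x | MvPolynomial.eval (fun i => x i) p = 0} := by
        ext x; simp
      rw [this]
      refine MeasurableSet.biInter (Ps.finite_toSet.countable) (fun p _ => ?_)
      exact measurableSet_eq_fun (hcont p).measurable measurable_const
    have h2 : MeasurableSet {x : EuclideanSpace ℝ (Fin (m+1)) |
        ∀ q ∈ Qs, 0 < MvPolynomial.eval (fun i => x i) q} := by
      have : {x : EuclideanSpace ℝ (Fin (m+1)) |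
          ∀ q ∈ Qs, 0 < MvPolynomial.eval (fun i => x i) q}
          = ⋂ q ∈ {q | q ∈ Qs}, {x | 0 < MvPolynomial.eval (fun i => x i) q} := by
        ext x; simp
      rw [this]
      refine MeasurableSet.biInter (Qs.finite_toSet.countable) (fun q _ => ?_)
      exact measurableSet_lt measurable_const (hcont q).measurable
    have : {x : EuclideanSpace ℝ (Fin (m+1)) |
        (∀ p ∈ Ps, MvPolynomial.eval (fun i => x i) p = 0) ∧
        (∀ q ∈ Qs, 0 < MvPolynomial.eval (fun i => x i) q)}
        = {x | ∀ p ∈ Ps, MvPolynomial.eval (fun i => x i) p = 0} ∩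
          {x | ∀ q ∈ Qs, 0 < MvPolynomial.eval (fun i => x i) q} := rfl
    rw [this]
    exact h1.inter h2
  have hSmeas : MeasurableSet S := by
    have : S = ⋃ b ∈ {b | b ∈ B}, b := by
      rw [hSdef]; ext x; simp
    rw [this]
    exact MeasurableSet.biUnion (B.finite_toSet.countable) (fun b hb => hbmeas b hb)
  have hTmeas : MeasurableSet T := by
    rw [hTdef]; exact (tube_isClosed a e δ).measurableSet
  -- find a good line
  obtain ⟨p₀, hp₀⟩ := exists_good_line e he a δ lam hδ hlam0 (T ∩ S) (hTmeas.inter hSmeas)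
    (by rw [← hTdef]; exact Set.inter_subset_left)
    (by rw [← hTdef]; exact hvolTS)
  set M : Set ℝ := {t : ℝ | p₀ + t • e ∈ T ∩ S} with hMdef
  -- upper bound on the T-slice
  set B₀ : ℝ := (inner ℝ (a - p₀) e : ℝ) + 1 + δ with hB₀def
  have hee : (inner ℝ e e : ℝ) = 1 := by
    rw [real_inner_self_eq_norm_mul_norm, he, mul_one]
  have hB₀ : ∀ t : ℝ, (p₀ + t • e ∈ T) → t ≤ B₀ := by
    intro t htT
    rw [hTdef] at htT
    obtain ⟨s, hs, hd⟩ := htT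
    have h1 : |(inner ℝ (p₀ + t • e - (a + s • e)) e : ℝ)| ≤ dist (p₀ + t • e) (a + s • e) := by
      rw [dist_eq_norm]
      calc |(inner ℝ (p₀ + t • e - (a + s • e)) e : ℝ)|
          ≤ ‖p₀ + t • e - (a + s • e)‖ * ‖e‖ := abs_real_inner_le_norm _ _
        _ = ‖p₀ + t • e - (a + s • e)‖ := by rw [he, mul_one]
    have h2 : (inner ℝ (p₀ + t • e - (a + s • e)) e : ℝ)
        = (inner ℝ p₀ e : ℝ) - (inner ℝ a e : ℝ) + (t - s) := by
      simp only [inner_sub_left, inner_add_left, real_inner_smul_left, hee]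
      ring
    have h3 : (inner ℝ (a - p₀) e : ℝ) = (inner ℝ a e : ℝ) - (inner ℝ p₀ e : ℝ) := by
      rw [inner_sub_left]
    have h4 := (abs_le.1 (h1.trans hd)).2
    rw [h2] at h4
    rw [hB₀def, h3]
    linarith [hs.2]
  -- first pigeonhole: choose a basic set
  have hcover1 : M ⊆ ⋃ b ∈ B.toFinset, (M ∩ {s : ℝ | p₀ + s • e ∈ b}) := by
    intro t ht
    have htS : p₀ + t • e ∈ S := ht.2
    rw [hSdef] at htS
    obtain ⟨bset, hbmem, hbx⟩ := htS
    exact Set.mem_biUnion (List.mem_toFinset.2 hbmem) ⟨ht, hbx⟩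
  have hsum1 : ENNReal.ofReal (lam / 2)
      ≤ ∑ b ∈ B.toFinset, volume (M ∩ {s : ℝ | p₀ + s • e ∈ b}) :=
    le_trans hp₀ (le_trans (measure_mono hcover1) (measure_biUnion_finset_le _ _))
  have hlam2pos : (0:ℝ) < lam / 2 := by linarith
  obtain ⟨bset, hbsetF, hbvol⟩ := pigeon B.toFinset _ _ (ENNReal.ofReal_pos.2 hlam2pos).ne' hsum1
  have hbmemL : bset ∈ B := List.mem_toFinset.1 hbsetF
  have hE0 : (0:ℝ) < (E:ℝ) := by linarith
  set c₂ : ℝ := lam / 2 / (E:ℝ) with hc₂def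
  have hc₂pos : 0 < c₂ := div_pos hlam2pos hE0
  set G : Set ℝ := M ∩ {s : ℝ | p₀ + s • e ∈ bset} with hGdef
  have hG : ENNReal.ofReal c₂ ≤ volume G := by
    refine le_trans ?_ hbvol
    have hcard : (B.toFinset.card : ENNReal) ≤ (E : ENNReal) := by
      exact_mod_cast le_trans (List.toFinset_card_le B) hBlen
    calc ENNReal.ofReal c₂
        = ENNReal.ofReal (lam / 2) / ENNReal.ofReal (E:ℝ) := ENNReal.ofReal_div_of_pos hE0
      _ = ENNReal.ofReal (lam / 2) / (E : ENNReal) := by rw [ENNReal.ofReal_natCast]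
      _ ≤ ENNReal.ofReal (lam / 2) / (B.toFinset.card : ENNReal) :=
          ENNReal.div_le_div_left hcard _
  obtain ⟨Ps, Qs, hdeg, hbdef⟩ := hBbasic bset hbmemL
  have hmemb : ∀ s : ℝ, (p₀ + s • e ∈ bset) ↔
      ((∀ p ∈ Ps, (lineComp p₀ e p).eval s = 0) ∧
       (∀ q ∈ Qs, 0 < (lineComp p₀ e q).eval s)) := by
    intro s
    rw [hbdef]
    simp only [Set.mem_setOf_eq, lineComp_eval]
  have hc₂ne : ENNReal.ofReal c₂ ≠ 0 := (ENNReal.ofReal_pos.2 hc₂pos).ne'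
  have hPs : ∀ p ∈ Ps, lineComp p₀ e p = 0 := by
    intro p hp
    by_contra hne
    have hsub : G ⊆ {s : ℝ | Polynomial.IsRoot (lineComp p₀ e p) s} :=
      fun s hs => ((hmemb s).1 hs.2).1 p hp
    have h0 : volume G = 0 :=
      measure_mono_null hsub ((Polynomial.finite_setOf_isRoot hne).measure_zero _)
    rw [h0] at hG
    exact hc₂ne (le_antisymm hG zero_le)
  have hQs : ∀ q ∈ Qs, lineComp p₀ e q ≠ 0 := by
    intro q hq h0
    have hsub : G ⊆ (∅ : Set ℝ) := by
      intro s hs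
      have := ((hmemb s).1 hs.2).2 q hq
      rw [h0] at this
      simp at this
    have h1 : volume G = 0 := measure_mono_null hsub measure_empty
    rw [h1] at hG
    exact hc₂ne (le_antisymm hG zero_le)
  set R : Polynomial ℝ := (Qs.map (lineComp p₀ e)).prod with hRdef
  have hR0 : R ≠ 0 := by
    intro h0
    rw [hRdef, List.prod_eq_zero_iff] at h0
    obtain ⟨q, hq, hq0⟩ := List.mem_map.1 h0
    exact hQs q hq hq0
  set Z : Finset ℝ := R.roots.toFinset with hZdef
  have hZcard : Z.card ≤ E := by
    refine le_trans (Multiset.toFinset_card_le _) (le_trans R.card_roots' ?_)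
    refine le_trans (Polynomial.natDegree_list_prod_le _) ?_
    rw [List.map_map]
    have h1 : ((Qs.map (Polynomial.natDegree ∘ lineComp p₀ e)).sum
        ≤ (Qs.map MvPolynomial.totalDegree).sum) :=
      List.sum_le_sum (fun q _ => natDegree_lineComp_le p₀ e q)
    refine le_trans h1 (le_trans ?_ hdeg)
    rw [List.map_append, List.sum_append]
    exact Nat.le_add_left _ _
  set N : Finset ℝ := insert B₀ Z with hNdef
  have hNcard : N.card ≤ E + 1 := le_trans (Finset.card_insert_le _ _) (Nat.succ_le_succ hZcard)
  set FZ : ℝ → Set ℝ := fun z => {t ∈ G | t ≤ z ∧ ∀ w ∈ N, t ≤ w → z ≤ w} with hFZdef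
  have hcover2 : G ⊆ ⋃ z ∈ N, FZ z := by
    intro t ht
    have htB : t ≤ B₀ := hB₀ t ht.1.1
    have hne : (N.filter (fun z => t ≤ z)).Nonempty :=
      ⟨B₀, Finset.mem_filter.2 ⟨Finset.mem_insert_self _ _, htB⟩⟩
    have hzmem := Finset.min'_mem _ hne
    rw [Finset.mem_filter] at hzmem
    exact Set.mem_biUnion hzmem.1
      ⟨ht, hzmem.2, fun w hw htw => Finset.min'_le _ _ (Finset.mem_filter.2 ⟨hw, htw⟩)⟩
  have hsum2 : ENNReal.ofReal c₂ ≤ ∑ z ∈ N, volume (FZ z) :=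
    le_trans hG (le_trans (measure_mono hcover2) (measure_biUnion_finset_le _ _))
  obtain ⟨z, hzN, hzvol⟩ := pigeon N _ _ hc₂ne hsum2
  set c₃ : ℝ := c₂ / ((E:ℝ) + 1) with hc₃def
  have hc₃pos : 0 < c₃ := div_pos hc₂pos (by linarith)
  have hFzvol : ENNReal.ofReal c₃ ≤ volume (FZ z) := by
    refine le_trans ?_ hzvol
    have hcard : (N.card : ENNReal) ≤ ((E:ENNReal) + 1) := by exact_mod_cast hNcard
    calc ENNReal.ofReal c₃
        = ENNReal.ofReal c₂ / ENNReal.ofReal ((E:ℝ) + 1) :=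
          ENNReal.ofReal_div_of_pos (by linarith)
      _ = ENNReal.ofReal c₂ / ((E:ENNReal) + 1) := by
          rw [ENNReal.ofReal_add (by positivity) zero_le_one, ENNReal.ofReal_natCast,
            ENNReal.ofReal_one]
      _ ≤ ENNReal.ofReal c₂ / (N.card : ENNReal) := ENNReal.div_le_div_left hcard _
  have hpair : ∃ t ∈ FZ z, ∃ t' ∈ FZ z, c₃ / 4 ≤ t' - t := by
    by_contra hcon
    push_neg at hcon
    have hne : (FZ z).Nonempty :=
      nonempty_of_measure_ne_zero (lt_of_lt_of_le (ENNReal.ofReal_pos.2 hc₃pos) hFzvol).ne'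
    obtain ⟨u, hu⟩ := hne
    have hsub : FZ z ⊆ Icc (u - c₃/4) (u + c₃/4) := by
      intro v hv
      constructor
      · linarith [hcon v hv u hu]
      · linarith [hcon u hu v hv]
    have hm : volume (FZ z) ≤ volume (Icc (u - c₃/4) (u + c₃/4)) := measure_mono hsub
    rw [Real.volume_Icc] at hm
    have h2 : u + c₃/4 - (u - c₃/4) = c₃/2 := by ring
    rw [h2] at hm
    have h3 := le_trans hFzvol hm
    rw [ENNReal.ofReal_le_ofReal_iff (by linarith)] at h3
    linarith
  obtain ⟨t, ht, t', ht', hgap⟩ := hpair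
  -- convexity of T and of its slice
  have hTconv : Convex ℝ T := by
    rw [hTdef]
    intro x hx y hy α β hα hβ hab
    obtain ⟨s1, hs1, hd1⟩ := hx
    obtain ⟨s2, hs2, hd2⟩ := hy
    have hαval : α = 1 - β := by linarith
    subst hαval
    refine ⟨(1-β)*s1 + β*s2, ⟨by nlinarith [hs1.1, hs2.1], by nlinarith [hs1.2, hs2.2]⟩, ?_⟩
    have hrw : (1-β)•x + β•y - (a + ((1-β)*s1 + β*s2)•e)
        = (1-β)•(x - (a + s1•e)) + β•(y - (a + s2•e)) := by module
    rw [dist_eq_norm, hrw]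
    have hn1 : ‖x - (a + s1 • e)‖ ≤ δ := by rw [← dist_eq_norm]; exact hd1
    have hn2 : ‖y - (a + s2 • e)‖ ≤ δ := by rw [← dist_eq_norm]; exact hd2
    calc ‖(1-β)•(x - (a + s1•e)) + β•(y - (a + s2•e))‖
        ≤ ‖(1-β)•(x - (a + s1•e))‖ + ‖β•(y - (a + s2•e))‖ := norm_add_le _ _
      _ = (1-β) * ‖x - (a + s1•e)‖ + β * ‖y - (a + s2•e)‖ := by
          rw [norm_smul, norm_smul, Real.norm_of_nonneg hα, Real.norm_of_nonneg hβ]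
      _ ≤ (1-β) * δ + β * δ := by
          exact add_le_add (mul_le_mul_of_nonneg_left hn1 hα) (mul_le_mul_of_nonneg_left hn2 hβ)
      _ = δ := by ring
  have hsliceTconv : Convex ℝ {s : ℝ | p₀ + s • e ∈ T} := by
    intro s1 h1 s2 h2 α β hα hβ hab
    have hαval : α = 1 - β := by linarith
    subst hαval
    show p₀ + ((1-β) • s1 + β • s2) • e ∈ T
    have hrw : p₀ + ((1-β) • s1 + β • s2) • e = (1-β)•(p₀ + s1•e) + β•(p₀ + s2•e) := by
      simp only [smul_eq_mul]
      module
    rw [hrw]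
    exact hTconv h1 h2 hα hβ (by ring)
  have htM : t ∈ G := ht.1
  have ht'M : t' ∈ G := ht'.1
  have hIccT : Icc t t' ⊆ {s : ℝ | p₀ + s • e ∈ T} :=
    hsliceTconv.ordConnected.out htM.1.1 ht'M.1.1
  -- the S part
  have hIccS : ∀ s ∈ Icc t t', p₀ + s • e ∈ bset := by
    intro s hs
    rw [hmemb]
    refine ⟨fun p hp => by rw [hPs p hp]; simp, fun q hq => ?_⟩
    by_contra hnpos
    push_neg at hnpos
    have hqt : 0 < (lineComp p₀ e q).eval t := ((hmemb t).1 htM.2).2 q hq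
    have hqt' : 0 < (lineComp p₀ e q).eval t' := ((hmemb t').1 ht'M.2).2 q hq
    have hroot : ∃ w, w ∈ Icc t s ∧ (lineComp p₀ e q).eval w = 0 := by
      rcases hnpos.lt_or_eq with hlt | heq
      · have hts : t ≤ s := hs.1
        have himg := intermediate_value_Icc' hts
          (Polynomial.continuous (lineComp p₀ e q)).continuousOn
          (show (0:ℝ) ∈ Icc ((lineComp p₀ e q).eval s) ((lineComp p₀ e q).eval t) from
            ⟨le_of_lt hlt, le_of_lt hqt⟩)
        obtain ⟨w, hw, hw0⟩ := himg
        exact ⟨w, hw, hw0⟩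
      · exact ⟨s, ⟨hs.1, le_refl s⟩, heq⟩
    obtain ⟨w, hwmem, hw0⟩ := hroot
    have hwZ : w ∈ Z := by
      rw [hZdef, Multiset.mem_toFinset, Polynomial.mem_roots hR0]
      show Polynomial.IsRoot R w
      rw [Polynomial.IsRoot, hRdef, Polynomial.eval_list_prod]
      apply List.prod_eq_zero
      rw [List.map_map]
      exact List.mem_map.2 ⟨q, hq, hw0⟩
    have hwN : w ∈ N := Finset.mem_insert_of_mem hwZ
    have hzw : z ≤ w := ht.2.2 w hwN hwmem.1
    have ht'z : t' ≤ z := ht'.2.1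
    have hwt' : w = t' := le_antisymm (hwmem.2.trans hs.2) (ht'z.trans hzw)
    rw [hwt'] at hw0
    rw [hw0] at hqt'
    exact lt_irrefl 0 hqt'
  -- conclusion
  have hCeq : lam / (8 * (E:ℝ) * ((E:ℝ) + 1)) = c₃ / 4 := by
    rw [hc₃def, hc₂def, div_div, div_div, div_div]
    congr 1
    ring
  refine ⟨p₀ + t • e, ?_⟩
  rintro zz ⟨s, hsIcc, w, -, hwnorm, rfl⟩
  have hts' : t + s ∈ Icc t t' := by
    constructor
    · linarith [hsIcc.1]
    · have := hsIcc.2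
      rw [hCeq] at this
      linarith
  have hqT : p₀ + (t + s) • e ∈ T := hIccT hts'
  have hqS : p₀ + (t + s) • e ∈ S := by
    rw [hSdef]
    exact ⟨bset, hbmemL, hIccS _ hts'⟩
  have hdiff : p₀ + t • e + s • e + w - (p₀ + (t + s) • e) = w := by module
  have hdq : dist (p₀ + t • e + s • e + w) (p₀ + (t + s) • e) ≤ δ := by
    rw [dist_eq_norm, hdiff]
    exact hwnorm
  exact ⟨mem_cthickening_of_dist_le _ _ δ T hqT hdq,
    mem_cthickening_of_dist_le _ _ δ S hqS hdq⟩
end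
end
end

section
/- Let n ≥ 1 be an integer, let I ⊆ ℝ be a compact interval of positive length |I|, and let r_1, …, r_n ∈ ℂ. Then the set of t ∈ I such that |t − r_j| ≥ |I|/(4n) for all j = 1, …, n has one-dimensional Lebesgue measure at least |I|/2. Consequently, for any a ∈ ℂ, the polynomial P(t) = a·(t−r_1)···(t−r_n) satisfies |P(t)| ≥ (|I|/(4n))^n·|a| on a subset of I of measure at least |I|/2. -/
open MeasureTheory Set

/-- root-avoidance estimate from the proof of Theorem 3.1 of
Katz–Rogers. Let `I = [a,b]` be a compact interval of positive length and
`r_1, …, r_n ∈ ℂ`. The set of `t ∈ I` with `|t - r_j| ≥ |I|/(4n)` for all `j` has Lebesgue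
measure at least `|I|/2`; consequently, for any `c ∈ ℂ` the polynomial
`P(t) = c (t - r_1) ⋯ (t - r_n)` satisfies `|P(t)| ≥ (|I|/(4n))^n |c|` on a subset of `I`
of measure at least `|I|/2`. -/
theorem statement12 (n : ℕ) (hn : 1 ≤ n) (a b : ℝ) (hab : a < b) (r : Fin n → ℂ) :
    ENNReal.ofReal ((b - a) / 2) ≤
      volume {t ∈ Set.Icc a b | ∀ j, (b - a) / (4 * n) ≤ ‖(t : ℂ) - r j‖} ∧
    ∀ c : ℂ,
      ENNReal.ofReal ((b - a) / 2) ≤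
        volume {t ∈ Set.Icc a b |
          ((b - a) / (4 * n)) ^ n * ‖c‖ ≤
            ‖c * ∏ j, ((t : ℂ) - r j)‖} := by
  have hn0 : (0:ℝ) < n := by exact_mod_cast hn
  have hba : (0:ℝ) < b - a := by linarith
  set δ : ℝ := (b - a) / (4 * n) with hδdef
  have hδ : 0 < δ := by positivity
  set G := {t ∈ Set.Icc a b | ∀ j, δ ≤ ‖(t : ℂ) - r j‖} with hG
  have hmain : ENNReal.ofReal ((b - a) / 2) ≤ volume G := by
    have hcover : Set.Icc a b ⊆ G ∪ ⋃ j, Set.Ioo ((r j).re - δ) ((r j).re + δ) := by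
      intro t ht
      by_cases h : ∀ j, δ ≤ ‖(t : ℂ) - r j‖
      · exact Or.inl ⟨ht, h⟩
      · push_neg at h
        obtain ⟨j, hj⟩ := h
        refine Or.inr (Set.mem_iUnion.2 ⟨j, ?_⟩)
        have h1 : |t - (r j).re| ≤ ‖(t:ℂ) - r j‖ := by
          have := Complex.abs_re_le_norm ((t:ℂ) - r j)
          simpa using this
        have h2 : |t - (r j).re| < δ := lt_of_le_of_lt h1 hj
        rw [abs_lt] at h2
        constructor <;> [linarith [h2.1]; linarith [h2.2]]
    have hunion : volume (⋃ j, Set.Ioo ((r j).re - δ) ((r j).re + δ)) ≤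
        ENNReal.ofReal ((b-a)/2) := by
      calc volume (⋃ j, Set.Ioo ((r j).re - δ) ((r j).re + δ))
          ≤ ∑ j, volume (Set.Ioo ((r j).re - δ) ((r j).re + δ)) :=
            measure_iUnion_fintype_le _ _
        _ = ∑ _j : Fin n, ENNReal.ofReal (2*δ) := by
            apply Finset.sum_congr rfl
            intro j _
            rw [Real.volume_Ioo]
            congr 1
            ring
        _ = (n : ENNReal) * ENNReal.ofReal (2*δ) := by
            simp [Finset.sum_const, nsmul_eq_mul]
        _ = ENNReal.ofReal ((n:ℝ) * (2*δ)) := by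
            rw [ENNReal.ofReal_mul (by positivity : (0:ℝ) ≤ (n:ℝ)),
              ENNReal.ofReal_mul (by norm_num : (0:ℝ) ≤ 2)]
            simp
        _ = ENNReal.ofReal ((b-a)/2) := by
            congr 1
            rw [hδdef]
            field_simp
            ring
    have h : ENNReal.ofReal ((b-a)/2) + ENNReal.ofReal ((b-a)/2) ≤
        volume G + ENNReal.ofReal ((b-a)/2) := by
      calc ENNReal.ofReal ((b-a)/2) + ENNReal.ofReal ((b-a)/2)
          = ENNReal.ofReal (b-a) := by
            rw [← ENNReal.ofReal_add (by linarith) (by linarith)]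
            congr 1; ring
        _ = volume (Set.Icc a b) := Real.volume_Icc.symm
        _ ≤ volume (G ∪ ⋃ j, Set.Ioo ((r j).re - δ) ((r j).re + δ)) :=
            measure_mono hcover
        _ ≤ volume G + volume (⋃ j, Set.Ioo ((r j).re - δ) ((r j).re + δ)) :=
            measure_union_le _ _
        _ ≤ volume G + ENNReal.ofReal ((b-a)/2) := add_le_add_right hunion _
    exact (ENNReal.add_le_add_iff_right (by simp)).1 h
  refine ⟨hmain, fun c => le_trans hmain (measure_mono ?_)⟩
  rintro t ⟨htI, ht⟩
  refine ⟨htI, ?_⟩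
  rw [norm_mul, norm_prod]
  have hprod : δ ^ n ≤ ∏ j, ‖(t:ℂ) - r j‖ := by
    have : δ ^ n = ∏ _j : Fin n, δ := by
      rw [Finset.prod_const, Finset.card_univ, Fintype.card_fin]
    rw [this]
    exact Finset.prod_le_prod (fun j _ => hδ.le) (fun j _ => ht j)
  calc δ ^ n * ‖c‖ ≤ (∏ j, ‖(t:ℂ) - r j‖) * ‖c‖ :=
        mul_le_mul_of_nonneg_right hprod (norm_nonneg c)
    _ = ‖c‖ * ∏ j, ‖(t:ℂ) - r j‖ := mul_comm _ _
end
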